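/- For every μ ∈ P_r there exist w ∈ S_r and λ ∈ Q_r such that rμ − δ + w•δ = rλ; equivalently, rμ − δ + w•δ ∈ rQ_r. -/
import Mathlib


open Finset

noncomputable section

/-- Inner product `⟨u,v⟩ = Σ_i u i * v i` on `ℚ^r`. -/
def ip {r : ℕ} (u v : Fin r → ℚ) : ℚ := ∑ i, u i * v i

/-- Action of `S_r` permuting coordinates: `(w • v) i = v (w⁻¹ i)`. -/
def pact {r : ℕ} (w : Equiv.Perm (Fin r)) (v : Fin r → ℚ) : Fin r → ℚ := fun i => v (w⁻¹ i)

/-- The Weyl vector `δ`, whose (1-indexed) `i`-th coordinate is `(r+1-2i)/2`. -/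
def weylδ (r : ℕ) : Fin r → ℚ := fun j => ((r : ℚ) - 1 - 2 * ((j : ℕ) : ℚ)) / 2

/-- Membership in `V = {v : Fin r → ℚ | Σ_i v i = 0}`. -/
def memV {r : ℕ} (v : Fin r → ℚ) : Prop := ∑ i, v i = 0

/-- Membership in the root lattice `Q_r`. -/
def memQ {r : ℕ} (v : Fin r → ℚ) : Prop := memV v ∧ ∀ i, ∃ m : ℤ, v i = (m : ℚ)

/-- Membership in the weight lattice `P_r`. -/
def memP {r : ℕ} (v : Fin r → ℚ) : Prop := memV v ∧ ∀ i j, ∃ m : ℤ, v i - v j = (m : ℚ)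

/-- The first fundamental weight `Λ₁ = ε₁ - (1/r)(ε₁ + ⋯ + ε_r)`. -/
def Lam1 (r : ℕ) : Fin r → ℚ := fun j => (if (j : ℕ) = 0 then 1 else 0) - 1 / (r : ℚ)

/-- The simple roots, 0-indexed: `srootF i = ε_{i+1} - ε_{i+2}` in 1-indexed notation. -/
def srootF {r : ℕ} (i : Fin (r - 1)) : Fin r → ℚ :=
  fun j => (if (j : ℕ) = (i : ℕ) then 1 else 0) - (if (j : ℕ) = (i : ℕ) + 1 then 1 else 0)

/-- The highest root `θ = ε₁ - ε_r`. -/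
def hroot (r : ℕ) : Fin r → ℚ :=
  fun j => (if (j : ℕ) = 0 then 1 else 0) - (if (j : ℕ) = r - 1 then 1 else 0)

/-- The set `Π_{r,n}` of weights of `L_r(nΛ₁)`:
all `nΛ₁ - a₁α₁ - ⋯ - a_{r-1}α_{r-1}` with `n ≥ a₁ ≥ ⋯ ≥ a_{r-1} ≥ 0`. -/
def PiWts (r n : ℕ) : Set (Fin r → ℚ) :=
  {v | ∃ a : Fin (r - 1) → ℤ, (∀ i, 0 ≤ a i) ∧ (∀ i, a i ≤ (n : ℤ)) ∧
        (∀ i j, i ≤ j → a j ≤ a i) ∧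
        v = (n : ℚ) • Lam1 r - ∑ i, (a i : ℚ) • srootF i}

/-- For every `μ ∈ P_r` there exist `w ∈ S_r` and `λ ∈ Q_r` with
`rμ - δ + w•δ = rλ`, i.e. `rμ - δ + w•δ ∈ rQ_r`. -/
theorem stmt5 (r : ℕ) (hr : 2 ≤ r) (μ : Fin r → ℚ) (hμ : memP μ) :
    ∃ (w : Equiv.Perm (Fin r)) (lam : Fin r → ℚ), memQ lam ∧
      (r : ℚ) • μ - weylδ r + pact w (weylδ r) = (r : ℚ) • lam := by
  haveI : NeZero r := ⟨by omega⟩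
  obtain ⟨hsum, hint⟩ := hμ
  choose n hn using hint
  have hrQ : (r:ℚ) ≠ 0 := by
    have : (0:ℚ) < r := by exact_mod_cast (by omega : 0 < r)
    linarith
  set S : ℤ := ∑ j, n j 0 with hS
  have hμ0 : ∀ i, μ i = μ 0 + n i 0 := fun i => by have := hn i 0; linarith
  have hrμ0 : (r:ℚ) * μ 0 = -(S:ℚ) := by
    have h1 : (0:ℚ) = ∑ i, (μ 0 + (n i 0 : ℚ)) := by
      rw [← hsum]; exact Finset.sum_congr rfl (fun i _ => hμ0 i)
    rw [Finset.sum_add_distrib, Finset.sum_const, Finset.card_univ, Fintype.card_fin] at h1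
    have : ((S:ℚ)) = ∑ i : Fin r, (n i 0 : ℚ) := by rw [hS]; push_cast; ring
    rw [← this] at h1
    rw [nsmul_eq_mul] at h1; linarith
  have hm : ∀ i, (r:ℚ) * μ i = ((r * n i 0 - S : ℤ) : ℚ) := by
    intro i; rw [hμ0 i]; push_cast; ring_nf; ring_nf at hrμ0; linarith
  have hrpos : (0:ℤ) < (r:ℤ) := by exact_mod_cast (by omega : 0 < r)
  set k : ℕ := ((-S) % (r:ℤ)).toNat with hk
  have hk' : (k:ℤ) = (-S) % (r:ℤ) := Int.toNat_of_nonneg (Int.emod_nonneg _ (by omega))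
  have hklt : k < r := by
    have h1 := Int.emod_lt_of_pos (-S) hrpos
    omega
  set κ : Fin r := ⟨k, hklt⟩ with hκ
  set lam : Fin r → ℚ := fun i => μ i + (((i:ℕ):ℚ) - ((((i:ℕ)+k)%r : ℕ):ℚ))/r with hlam
  have hlamval : ∀ i : Fin r, (r:ℚ) * lam i
      = ((r * n i 0 - S + (i:ℕ) - (((i:ℕ)+k)%r : ℕ) : ℤ) : ℚ) := by
    intro i
    have ecast : (((((i:ℕ)+k)%r : ℕ) : ℤ) : ℚ) = ((((i:ℕ)+k)%r : ℕ) : ℚ) := by norm_cast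
    rw [hlam]
    have := hm i
    push_cast [← ecast] at this ⊢
    field_simp
    linarith
  refine ⟨(Equiv.addRight κ)⁻¹, lam, ⟨?_, ?_⟩, ?_⟩
  · -- sum zero
    show ∑ i, lam i = 0
    have hbij : ∑ i : Fin r, (((((i:ℕ)+k)%r : ℕ)) : ℚ) = ∑ i : Fin r, ((i:ℕ) : ℚ) := by
      have := Fintype.sum_equiv (Equiv.addRight κ) (fun i : Fin r => (((i + κ : Fin r) : ℕ) : ℚ))
        (fun i : Fin r => ((i:ℕ) : ℚ)) (fun i => rfl)
      calc ∑ i : Fin r, (((((i:ℕ)+k)%r : ℕ)) : ℚ)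
          = ∑ i : Fin r, (((i + κ : Fin r) : ℕ) : ℚ) := by
            refine Finset.sum_congr rfl (fun i _ => ?_)
            rw [Fin.val_add]
        _ = ∑ i : Fin r, ((i:ℕ) : ℚ) := this
    have hsum' : ∑ i, μ i = 0 := hsum
    rw [hlam]
    rw [Finset.sum_add_distrib, hsum', zero_add, ← Finset.sum_div,
      Finset.sum_sub_distrib, hbij, sub_self, zero_div]
  · -- integrality
    intro i
    refine ⟨n i 0 + (-S)/(r:ℤ) + (((i:ℕ):ℤ)+(k:ℤ))/(r:ℤ), ?_⟩
    have key : (r * n i 0 - S + (i:ℕ) - (((i:ℕ)+k)%r : ℕ) : ℤ)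
        = (r:ℤ) * (n i 0 + (-S)/(r:ℤ) + (((i:ℕ):ℤ)+(k:ℤ))/(r:ℤ)) := by
      have e1 : (-S) = (r:ℤ) * ((-S)/(r:ℤ)) + (-S) % (r:ℤ) := (Int.mul_ediv_add_emod _ _).symm
      have e2 : ((((i:ℕ):ℤ)+(k:ℤ))) = (r:ℤ) * ((((i:ℕ):ℤ)+(k:ℤ))/(r:ℤ)) + (((i:ℕ):ℤ)+(k:ℤ)) % (r:ℤ) := (Int.mul_ediv_add_emod _ _).symm
      have e3 : ((((i:ℕ)+k)%r : ℕ) : ℤ) = (((i:ℕ):ℤ)+(k:ℤ)) % (r:ℤ) := by push_cast; ring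
      rw [e3, mul_add, mul_add]
      omega
    have := hlamval i
    rw [key] at this
    push_cast at this
    have h2 : (r:ℚ) * lam i = (r:ℚ) * ((n i 0 + (-S)/(r:ℤ) + (((i:ℕ):ℤ)+(k:ℤ))/(r:ℤ) : ℤ) : ℚ) := by
      push_cast; linarith
    exact mul_left_cancel₀ hrQ h2
  · -- main equation
    funext i
    simp only [Pi.add_apply, Pi.sub_apply, Pi.smul_apply, smul_eq_mul, pact, weylδ]
    have hw : ((Equiv.addRight κ)⁻¹)⁻¹ i = i + κ := by simp [Equiv.addRight]
    rw [hw]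
    have hv : ((i + κ : Fin r) : ℕ) = ((i:ℕ)+k)%r := Fin.val_add i κ
    rw [hv, hlam]
    have hle : (((i:ℕ)+k)%r) < r := Nat.mod_lt _ (by omega)
    field_simp
    ring
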